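/- Let f, g : ℝ^N → ℝ be quasiconvex functions such that f = g almost everywhere with respect to Lebesgue measure. Suppose that the pointwise infimum of f over ℝ^N equals its essential infimum over ℝ^N, and likewise the pointwise infimum of g over ℝ^N equals its essential infimum over ℝ^N. Then for every x ∈ ℝ^N, f is approximately continuous at x if and only if g is approximately continuous at x, and at any such common point of approximate continuity f(x) = g(x). -/

import Mathlib

open MeasureTheory Metric Filter
open scoped ENNReal

/-- `f` is approximately continuous at `x` if for every `ε > 0` the set
`{y | |f y - f x| < ε}` has Lebesgue density `1` at `x`. -/
def ApproxContinuousAt {N : ℕ} (f : EuclideanSpace ℝ (Fin N) → ℝ)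
    (x : EuclideanSpace ℝ (Fin N)) : Prop :=
  ∀ ε : ℝ, 0 < ε →
    Tendsto (fun r : ℝ => volume ({y | |f y - f x| < ε} ∩ ball x r) / volume (ball x r))
      (nhdsWithin 0 (Set.Ioi 0)) (nhds 1)

section Aux

variable {N : ℕ}

local notation "E" => EuclideanSpace ℝ (Fin N)

/-- A quasiconvex function is null-measurable. -/
lemma quasi_nullMeasurable (f : E → ℝ) (hf : ∀ α : ℝ, Convex ℝ {x | f x < α}) :
    NullMeasurable f (volume : Measure E) := by
  intro s hs
  have hb : MeasurableSet[MeasurableSpace.generateFrom (Set.range Set.Iio)] s := by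
    rw [← borel_eq_generateFrom_Iio ℝ]
    exact hs
  refine MeasurableSpace.generateFrom_induction (Set.range Set.Iio)
    (fun t _ => NullMeasurableSet (f ⁻¹' t) volume) ?_ (by simp) ?_ ?_ s hb
  · rintro t ⟨α, rfl⟩ _
    have : f ⁻¹' Set.Iio α = {x | f x < α} := rfl
    rw [this]
    exact (hf α).nullMeasurableSet _
  · intro t _ ht
    rw [Set.preimage_compl]; exact ht.compl
  · intro t _ ht
    rw [Set.preimage_iUnion]; exact NullMeasurableSet.iUnion ht

/-- A hyperplane has measure zero. -/
lemma hyperplane_null (ℓ : E →L[ℝ] ℝ) (hℓ : ℓ ≠ 0) (c : ℝ) :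
    volume {y : E | ℓ y = c} = 0 := by
  obtain ⟨u, hu⟩ : ∃ u : E, ℓ u ≠ 0 := by
    by_contra h
    push_neg at h
    exact hℓ (ContinuousLinearMap.ext fun y => by simp [h])
  set x₀ : E := (c / ℓ u) • u with hx₀def
  have hx₀ : ℓ x₀ = c := by
    simp [hx₀def, div_mul_cancel₀ _ hu]
  have hker : (LinearMap.ker (ℓ : E →ₗ[ℝ] ℝ) : Submodule ℝ E) ≠ ⊤ := by
    intro h
    have : u ∈ LinearMap.ker (ℓ : E →ₗ[ℝ] ℝ) := h ▸ Submodule.mem_top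
    exact hu (LinearMap.mem_ker.1 this)
  have h1 : {y : E | ℓ y = c} = (fun y => y + -x₀) ⁻¹' (LinearMap.ker (ℓ : E →ₗ[ℝ] ℝ) : Set E) := by
    ext y
    simp only [Set.mem_setOf_eq, Set.mem_preimage, SetLike.mem_coe, LinearMap.mem_ker,
      ContinuousLinearMap.coe_coe]
    rw [show ℓ (y + -x₀) = ℓ y - ℓ x₀ by rw [map_add, map_neg]; ring, hx₀]
    constructor <;> intro h <;> linarith [h]
  rw [h1, measure_preimage_add_right]
  exact Measure.addHaar_submodule volume _ hker

/-- A closed half-space through the center cuts a ball in exactly half (in measure). -/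
lemma halfspace_ball (ℓ : E →L[ℝ] ℝ) (hℓ : ℓ ≠ 0) (x : E) (r : ℝ) :
    volume ({y : E | ℓ y ≤ ℓ x} ∩ ball x r) = volume (ball x r) / 2 := by
  set A := {y : E | ℓ y ≤ ℓ x} ∩ ball x r with hA
  set B := {y : E | ℓ x ≤ ℓ y} ∩ ball x r with hB
  have hmp : MeasurePreserving (fun y : E => (x + x) - y) volume volume :=
    Measure.measurePreserving_sub_left volume (x + x)
  have hpre : (fun y : E => (x + x) - y) ⁻¹' A = B := by
    ext y
    simp only [hA, hB, Set.mem_preimage, Set.mem_inter_iff, Set.mem_setOf_eq, mem_ball]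
    constructor
    · rintro ⟨h1, h2⟩
      rw [map_sub, map_add] at h1
      refine ⟨by linarith, ?_⟩
      rw [dist_eq_norm] at h2 ⊢
      have : x + x - y - x = -(y - x) := by abel
      rw [this, norm_neg] at h2
      exact h2
    · rintro ⟨h1, h2⟩
      rw [map_sub, map_add]
      refine ⟨by linarith, ?_⟩
      rw [dist_eq_norm] at h2 ⊢
      have : x + x - y - x = -(y - x) := by abel
      rw [this, norm_neg]
      exact h2
  have hBmeas : MeasurableSet B := by
    apply MeasurableSet.inter
    · exact isClosed_le continuous_const ℓ.continuous |>.measurableSet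
    · exact measurableSet_ball
  have hAmeas : MeasurableSet A := by
    apply MeasurableSet.inter
    · exact isClosed_le ℓ.continuous continuous_const |>.measurableSet
    · exact measurableSet_ball
  have hAB : volume A = volume B := by
    have h := hmp.measure_preimage hAmeas.nullMeasurableSet
    rw [hpre] at h
    exact h.symm
  have hunion : A ∪ B = ball x r := by
    ext y
    simp only [hA, hB, Set.mem_union, Set.mem_inter_iff, Set.mem_setOf_eq]
    constructor
    · rintro (⟨_, h⟩ | ⟨_, h⟩) <;> exact h
    · intro h
      rcases le_total (ℓ y) (ℓ x) with h' | h'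
      · exact Or.inl ⟨h', h⟩
      · exact Or.inr ⟨h', h⟩
  have hinter : volume (A ∩ B) = 0 := by
    apply measure_mono_null (t := {y : E | ℓ y = ℓ x})
    · rintro y ⟨⟨h1, _⟩, ⟨h2, _⟩⟩
      exact le_antisymm h1 h2
    · exact hyperplane_null ℓ hℓ _
  have key : volume (ball x r) = volume A + volume A := by
    have := measure_union_add_inter₀ (μ := volume) A hBmeas.nullMeasurableSet
    rw [hunion, hinter, add_zero] at this
    rw [this, hAB]
  rw [ENNReal.eq_div_iff (by norm_num) (by norm_num)]
  rw [two_mul, ← key]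

end Aux

section Key

variable {N : ℕ}

local notation "E" => EuclideanSpace ℝ (Fin N)

lemma key_lemma (f g : E → ℝ) (hg : ∀ α : ℝ, Convex ℝ {x | g x < α})
    (hfg : f =ᵐ[volume] g)
    (hgi : (⨅ x, (g x : EReal)) = essInf (fun x => (g x : EReal)) volume)
    (x : E) (hx : ApproxContinuousAt f x) : g x = f x := by
  have hT : volume {y : E | ¬ f y = g y} = 0 := by
    have h := hfg
    rwa [Filter.EventuallyEq, ae_iff] at h
  rcases subsingleton_or_nontrivial (EuclideanSpace ℝ (Fin N)) with hsub | hnt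
  · -- subsingleton case : f = g everywhere
    have hfg' : f = g := by
      funext y
      by_contra hy
      have h1 : {z : E | ¬ f z = g z} = Set.univ :=
        Set.eq_univ_of_forall fun z => by rw [Subsingleton.elim z y]; exact hy
      rw [h1] at hT
      have h2 : (0 : ℝ≥0∞) < volume (Set.univ : Set E) :=
        IsOpen.measure_pos volume isOpen_univ ⟨0, trivial⟩
      rw [hT] at h2
      exact lt_irrefl _ h2
    rw [hfg']
  by_contra hne
  rcases lt_or_gt_of_ne hne with hlt | hgt
  · -- Case 1 : g x < f x
    set ε : ℝ := (f x - g x) / 2 with hεdef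
    have hεpos : 0 < ε := by simp only [hεdef]; linarith
    have hStend := hx ε hεpos
    set S := {y : E | |f y - f x| < ε} with hSdef
    set C := {y : E | g y < f x - ε} with hCdef
    have hxC : x ∈ C := by
      simp only [hCdef, Set.mem_setOf_eq, hεdef]; linarith
    have hCS : volume (C ∩ S) = 0 := by
      refine measure_mono_null ?_ hT
      rintro y ⟨hyC, hyS⟩
      simp only [hCdef, Set.mem_setOf_eq] at hyC
      simp only [hSdef, Set.mem_setOf_eq, abs_lt] at hyS
      intro h
      rw [h] at hyS
      linarith [hyS.1]
    have hSnm : NullMeasurableSet S volume := by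
      have h1 : NullMeasurableSet {y : E | |g y - f x| < ε} volume := by
        have he : {y : E | |g y - f x| < ε} = g ⁻¹' (Set.Ioo (f x - ε) (f x + ε)) := by
          ext y
          simp only [Set.mem_setOf_eq, Set.mem_preimage, Set.mem_Ioo, abs_lt]
          constructor <;> intro h <;> constructor <;> linarith [h.1, h.2]
        rw [he]
        exact quasi_nullMeasurable g hg measurableSet_Ioo
      refine h1.congr ?_
      rw [Filter.eventuallyEq_set]
      filter_upwards [hfg] with y hy
      simp only [Set.mem_setOf_eq, hSdef, hy]
    rcases Set.eq_empty_or_nonempty (interior C) with hint | ⟨z, hz⟩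
    · -- interior empty : C is null, contradict essInf condition
      have hC0 : volume C = 0 := by
        refine measure_mono_null ?_ ((hg (f x - ε)).addHaar_frontier volume)
        intro y hy
        exact ⟨subset_closure hy, fun h => by rw [hint] at h; exact h.elim⟩
      have hae : ∀ᵐ y ∂(volume : Measure E), ((f x - ε : ℝ) : EReal) ≤ (g y : EReal) := by
        have h2 : ∀ᵐ y ∂(volume : Measure E), ¬ (g y < f x - ε) := by
          rw [ae_iff]
          simpa only [not_not] using hC0
        filter_upwards [h2] with y hy
        exact EReal.coe_le_coe_iff.2 (not_lt.1 hy)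
      have h3 : ((f x - ε : ℝ) : EReal) ≤ ⨅ y, (g y : EReal) :=
        hgi ▸ le_essInf_of_ae_le _ hae
      have h4 : (⨅ y, (g y : EReal)) ≤ (g x : EReal) := iInf_le _ x
      have h5 : (f x - ε : ℝ) ≤ g x := EReal.coe_le_coe_iff.1 (h3.trans h4)
      have h6 : g x < f x - ε := hxC
      linarith
    · -- interior nonempty : cone density estimate
      obtain ⟨δ, hδpos, hδ⟩ : ∃ δ > 0, ball z δ ⊆ C :=
        Metric.mem_nhds_iff.1 (mem_interior_iff_mem_nhds.1 hz)
      set R : ℝ := dist z x + δ with hRdef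
      have hRpos : 0 < R := add_pos_of_nonneg_of_pos dist_nonneg hδpos
      have hδR : δ ≤ R := le_add_of_nonneg_left dist_nonneg
      set c : ℝ≥0∞ := ENNReal.ofReal ((δ / R) ^ N) with hcdef
      have hcpos : 0 < c := ENNReal.ofReal_pos.2 (by positivity)
      have hc1 : c ≤ 1 := by
        rw [hcdef, ← ENNReal.ofReal_one]
        exact ENNReal.ofReal_le_ofReal
          (pow_le_one₀ (by positivity) ((div_le_one hRpos).2 hδR))
      have hcone : ∀ r : ℝ, r ∈ Set.Ioo 0 R →
          c ≤ volume (C ∩ ball x r) / volume (ball x r) := by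
        rintro r ⟨hr0, hrR⟩
        set t : ℝ := r / R with htdef
        have ht0 : 0 < t := div_pos hr0 hRpos
        have ht1 : t ≤ 1 := (div_le_one hRpos).2 hrR.le
        set ctr : E := x + t • (z - x) with hctrdef
        have hball1 : ball ctr (t * δ) ⊆ C := by
          intro p hp
          set w : E := z + t⁻¹ • (p - ctr) with hwdef
          have hwz : w ∈ ball z δ := by
            rw [mem_ball, dist_eq_norm, hwdef, add_sub_cancel_left, norm_smul,
              Real.norm_eq_abs, abs_inv, abs_of_pos ht0]
            rw [mem_ball, dist_eq_norm] at hp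
            calc t⁻¹ * ‖p - ctr‖ < t⁻¹ * (t * δ) :=
                  mul_lt_mul_of_pos_left hp (inv_pos.2 ht0)
              _ = δ := by field_simp
          have htt : t • (t⁻¹ • (p - ctr)) = p - ctr := smul_inv_smul₀ ht0.ne' _
          have hpw : (1 - t) • x + t • w = p := by
            rw [hwdef, smul_add, htt, hctrdef]
            module
          have hmem : (1 - t) • x + t • w ∈ C :=
            hg (f x - ε) hxC (hδ hwz) (by linarith) ht0.le (by ring)
          rwa [hpw] at hmem
        have hball2 : ball ctr (t * δ) ⊆ ball x r := by
          intro p hp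
          rw [mem_ball] at hp ⊢
          have h1 : dist p x ≤ dist p ctr + dist ctr x := dist_triangle _ _ _
          have h2 : dist ctr x = t * dist z x := by
            rw [hctrdef, dist_eq_norm, add_sub_cancel_left, norm_smul, Real.norm_eq_abs,
              abs_of_pos ht0, ← dist_eq_norm]
          have hrt : r = t * R := by rw [htdef]; field_simp
          rw [hrt, hRdef]
          calc dist p x ≤ dist p ctr + t * dist z x := by rw [← h2]; exact h1
            _ < t * δ + t * dist z x := by linarith
            _ = t * (dist z x + δ) := by ring
        have hμ1 : volume (ball ctr (t * δ)) =
            ENNReal.ofReal ((t * δ) ^ N) * volume (ball (0 : E) 1) := by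
          rw [Measure.addHaar_ball volume _ (by positivity), finrank_euclideanSpace_fin]
        have hμ2 : volume (ball x r) =
            ENNReal.ofReal (r ^ N) * volume (ball (0 : E) 1) := by
          rw [Measure.addHaar_ball volume _ hr0.le, finrank_euclideanSpace_fin]
        rw [ENNReal.le_div_iff_mul_le (Or.inl (measure_ball_pos volume x hr0).ne')
          (Or.inl measure_ball_lt_top.ne)]
        calc c * volume (ball x r)
            = ENNReal.ofReal ((δ / R) ^ N) *
              (ENNReal.ofReal (r ^ N) * volume (ball (0 : E) 1)) := by rw [hμ2, hcdef]
          _ = ENNReal.ofReal ((δ / R) ^ N * r ^ N) * volume (ball (0 : E) 1) := by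
              rw [ENNReal.ofReal_mul (by positivity), mul_assoc]
          _ = ENNReal.ofReal ((t * δ) ^ N) * volume (ball (0 : E) 1) := by
              congr 2
              rw [← mul_pow]
              congr 1
              rw [htdef]
              field_simp
          _ = volume (ball ctr (t * δ)) := hμ1.symm
          _ ≤ volume (C ∩ ball x r) := measure_mono (Set.subset_inter hball1 hball2)
      -- now combine with density 1 of S
      have hhalf : (1 : ℝ≥0∞) - c / 2 < 1 := by
        refine ENNReal.sub_lt_self ENNReal.one_ne_top one_ne_zero ?_
        simp only [ne_eq, ENNReal.div_eq_zero_iff, not_or]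
        exact ⟨hcpos.ne', ENNReal.ofNat_ne_top⟩
      have hev1 : ∀ᶠ r in nhdsWithin (0:ℝ) (Set.Ioi 0),
          volume (S ∩ ball x r) / volume (ball x r) ∈ Set.Ioi ((1:ℝ≥0∞) - c / 2) :=
        hStend.eventually (eventually_mem_set.2 (Ioi_mem_nhds hhalf))
      have hev2 : ∀ᶠ r in nhdsWithin (0:ℝ) (Set.Ioi 0), r ∈ Set.Ioo (0:ℝ) R :=
        Ioo_mem_nhdsGT_of_mem ⟨le_refl 0, hRpos⟩
      obtain ⟨r, hr1, hr2⟩ := (hev1.and hev2).exists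
      have hb0 : volume (ball x r) ≠ 0 := (measure_ball_pos volume x hr2.1).ne'
      have hbt : volume (ball x r) ≠ ⊤ := measure_ball_lt_top.ne
      have hsum : volume (C ∩ ball x r) + volume (S ∩ ball x r) ≤ volume (ball x r) := by
        have hSbnm : NullMeasurableSet (S ∩ ball x r) (volume : Measure E) :=
          hSnm.inter measurableSet_ball.nullMeasurableSet
        have h1 := measure_union_add_inter₀ (μ := (volume : Measure E)) (C ∩ ball x r) hSbnm
        rw [← h1]
        have h2 : volume ((C ∩ ball x r) ∩ (S ∩ ball x r)) = 0 := by
          refine measure_mono_null ?_ hCS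
          rintro y ⟨⟨hy1, _⟩, ⟨hy2, _⟩⟩
          exact ⟨hy1, hy2⟩
        rw [h2, add_zero]
        refine measure_mono ?_
        rintro y (⟨_, h⟩ | ⟨_, h⟩) <;> exact h
      have hsum' : volume (C ∩ ball x r) / volume (ball x r) +
          volume (S ∩ ball x r) / volume (ball x r) ≤ 1 := by
        rw [ENNReal.div_add_div_same]
        calc (volume (C ∩ ball x r) + volume (S ∩ ball x r)) / volume (ball x r)
            ≤ volume (ball x r) / volume (ball x r) := ENNReal.div_le_div_right hsum _
          _ = 1 := ENNReal.div_self hb0 hbt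
      have hcr := hcone r hr2
      have hlt2 : c + ((1:ℝ≥0∞) - c / 2) <
          volume (C ∩ ball x r) / volume (ball x r) +
          volume (S ∩ ball x r) / volume (ball x r) :=
        ENNReal.add_lt_add_of_le_of_lt (ne_top_of_le_ne_top ENNReal.one_ne_top hc1)
          hcr hr1
      have hkey : (1 : ℝ≥0∞) ≤ c + ((1:ℝ≥0∞) - c / 2) := by
        have h5 : (1:ℝ≥0∞) - c / 2 + c / 2 = 1 :=
          tsub_add_cancel_of_le ((ENNReal.half_le_self).trans hc1)
        calc (1:ℝ≥0∞) = (1 - c / 2) + c / 2 := h5.symm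
          _ = c / 2 + (1 - c / 2) := add_comm _ _
          _ ≤ c + (1 - c / 2) := add_le_add_left ENNReal.half_le_self _
      exact absurd (hkey.trans_lt (hlt2.trans_le hsum')) (lt_irrefl _)
  · -- Case 2 : f x < g x
    set ε : ℝ := (g x - f x) / 2 with hεdef
    have hεpos : 0 < ε := by simp only [hεdef]; linarith
    have hStend := hx ε hεpos
    set S := {y : E | |f y - f x| < ε} with hSdef
    set D := {y : E | g y < f x + ε} with hDdef
    have hxD : x ∉ D := by
      simp only [hDdef, Set.mem_setOf_eq, not_lt, hεdef]; linarith
    have hSD : ∀ r : ℝ, volume (S ∩ ball x r) ≤ volume (D ∩ ball x r) := by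
      intro r
      calc volume (S ∩ ball x r)
          ≤ volume ((D ∩ ball x r) ∪ {y : E | ¬ f y = g y}) := by
            refine measure_mono ?_
            rintro y ⟨hyS, hyB⟩
            by_cases h : f y = g y
            · left
              refine ⟨?_, hyB⟩
              simp only [hSdef, Set.mem_setOf_eq, abs_lt] at hyS
              simp only [hDdef, Set.mem_setOf_eq, ← h]
              linarith [hyS.2]
            · right; exact h
        _ ≤ volume (D ∩ ball x r) + volume {y : E | ¬ f y = g y} := measure_union_le _ _
        _ = volume (D ∩ ball x r) := by rw [hT, add_zero]
    have hDhalf : ∀ r : ℝ, volume (D ∩ ball x r) ≤ volume (ball x r) / 2 := by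
      intro r
      rcases Set.eq_empty_or_nonempty (interior D) with hint | ⟨z, hz⟩
      · have hD0 : volume D = 0 := by
          refine measure_mono_null ?_ ((hg (f x + ε)).addHaar_frontier volume)
          intro y hy
          exact ⟨subset_closure hy, fun h => by rw [hint] at h; exact h.elim⟩
        calc volume (D ∩ ball x r) ≤ volume D := measure_mono Set.inter_subset_left
          _ = 0 := hD0
          _ ≤ volume (ball x r) / 2 := zero_le
      · obtain ⟨ℓ, hℓ⟩ := geometric_hahn_banach_open_point
          ((hg (f x + ε)).interior) isOpen_interior
          (fun h => hxD (interior_subset h))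
        have hℓz : ℓ z < ℓ x := hℓ z hz
        have hℓne : ℓ ≠ 0 := by
          intro h
          rw [h] at hℓz
          simp at hℓz
        have hDH : D ⊆ {y : E | ℓ y ≤ ℓ x} := by
          intro y hy
          simp only [Set.mem_setOf_eq]
          by_contra hcon
          push_neg at hcon
          have hyz : ℓ y - ℓ z > 0 := by linarith
          set t : ℝ := min 1 ((ℓ y - ℓ x) / (2 * (ℓ y - ℓ z))) with htdef
          have ht0 : 0 < t := lt_min one_pos (div_pos (by linarith) (by linarith))
          have ht1 : t ≤ 1 := min_le_left _ _
          have hmem : (1 - t) • y + t • z ∈ interior D :=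
            (hg (f x + ε)).combo_closure_interior_mem_interior
              (subset_closure hy) hz (by linarith) ht0 (by ring)
          have hval := hℓ _ hmem
          simp only [map_add, _root_.map_smul, smul_eq_mul] at hval
          have htb : t * (ℓ y - ℓ z) ≤ (ℓ y - ℓ x) / 2 := by
            have : t ≤ (ℓ y - ℓ x) / (2 * (ℓ y - ℓ z)) := min_le_right _ _
            calc t * (ℓ y - ℓ z) ≤ (ℓ y - ℓ x) / (2 * (ℓ y - ℓ z)) * (ℓ y - ℓ z) :=
                  mul_le_mul_of_nonneg_right this hyz.le
              _ = (ℓ y - ℓ x) / 2 := by field_simp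
          have hexp : (1 - t) * ℓ y + t * ℓ z = ℓ y - t * (ℓ y - ℓ z) := by ring
          rw [hexp] at hval
          linarith
        calc volume (D ∩ ball x r) ≤ volume ({y : E | ℓ y ≤ ℓ x} ∩ ball x r) :=
              measure_mono (Set.inter_subset_inter_left _ hDH)
          _ = volume (ball x r) / 2 := halfspace_ball ℓ hℓne x r
    -- density of S is at most 1/2, contradiction with density 1
    have hhalf1 : (1:ℝ≥0∞) / 2 < 1 := ENNReal.half_lt_self one_ne_zero ENNReal.one_ne_top
    have hev1 : ∀ᶠ r in nhdsWithin (0:ℝ) (Set.Ioi 0),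
        volume (S ∩ ball x r) / volume (ball x r) ∈ Set.Ioi ((1:ℝ≥0∞) / 2) :=
      hStend.eventually (eventually_mem_set.2 (Ioi_mem_nhds hhalf1))
    have hev2 : ∀ᶠ r in nhdsWithin (0:ℝ) (Set.Ioi 0), r ∈ Set.Ioi (0:ℝ) :=
      eventually_mem_nhdsWithin
    obtain ⟨r, hr1, hr2⟩ := (hev1.and hev2).exists
    have hb0 : volume (ball x r) ≠ 0 := (measure_ball_pos volume x hr2).ne'
    have hbt : volume (ball x r) ≠ ⊤ := measure_ball_lt_top.ne
    have hle : volume (S ∩ ball x r) / volume (ball x r) ≤ (1:ℝ≥0∞) / 2 := by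
      rw [ENNReal.div_le_iff_le_mul (Or.inl hb0) (Or.inl hbt)]
      calc volume (S ∩ ball x r) ≤ volume (ball x r) / 2 := (hSD r).trans (hDhalf r)
        _ = 1 / 2 * volume (ball x r) := by
            rw [div_eq_mul_inv, div_eq_mul_inv, one_mul, mul_comm]
    exact absurd (hr1.trans_le hle) (lt_irrefl _)

lemma transfer_lemma (f g : E → ℝ) (hfg : f =ᵐ[volume] g) (x : E) (hx : f x = g x)
    (h : ApproxContinuousAt f x) : ApproxContinuousAt g x := by
  intro ε hε
  have hcong : ∀ r : ℝ, volume ({y : E | |g y - g x| < ε} ∩ ball x r) =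
      volume ({y : E | |f y - f x| < ε} ∩ ball x r) := by
    intro r
    refine measure_congr ?_
    rw [Filter.eventuallyEq_set]
    filter_upwards [hfg] with y hy
    simp only [Set.mem_inter_iff, Set.mem_setOf_eq, hy, hx]
  have heq : (fun r : ℝ => volume ({y : E | |g y - g x| < ε} ∩ ball x r) / volume (ball x r)) =
      fun r : ℝ => volume ({y : E | |f y - f x| < ε} ∩ ball x r) / volume (ball x r) := by
    funext r
    rw [hcong]
  rw [heq]
  exact h ε hε

end Key

theorem stmt_9 {N : ℕ} (f g : EuclideanSpace ℝ (Fin N) → ℝ)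
    (hf : ∀ α : ℝ, Convex ℝ {x | f x < α}) (hg : ∀ α : ℝ, Convex ℝ {x | g x < α})
    (hfg : f =ᵐ[volume] g)
    (hfi : (⨅ x, (f x : EReal)) = essInf (fun x => (f x : EReal)) volume)
    (hgi : (⨅ x, (g x : EReal)) = essInf (fun x => (g x : EReal)) volume) :
    ∀ x : EuclideanSpace ℝ (Fin N),
      (ApproxContinuousAt f x ↔ ApproxContinuousAt g x) ∧
        (ApproxContinuousAt f x → ApproxContinuousAt g x → f x = g x) := by
  intro x
  constructor
  · constructor
    · intro hfx
      have hgx : g x = f x := key_lemma f g hg hfg hgi x hfx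
      exact transfer_lemma f g hfg x hgx.symm hfx
    · intro hgx
      have hfx : f x = g x := key_lemma g f hf hfg.symm hfi x hgx
      exact transfer_lemma g f hfg.symm x hfx.symm hgx
  · intro hfx _
    exact (key_lemma f g hg hfg hgi x hfx).symm
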